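/- Let R be a ring, S a unital subring of R, and K a nil ideal of R (every element of K is nilpotent) such that R = S + K, i.e., every element of R is a sum of an element of S and an element of K. Then R is strongly unit nil-clean if and only if S is strongly unit nil-clean. -/

import Mathlib

/-- An element `x` of a ring is *strongly nil-clean* if `x = e + b` where `e` is an
idempotent, `b` is nilpotent, and `e` and `b` commute. -/
def IsStronglyNilClean {R : Type*} [Ring R] (x : R) : Prop :=
  ∃ e b : R, IsIdempotentElem e ∧ IsNilpotent b ∧ e * b = b * e ∧ x = e + b

/-- A ring `R` is *strongly unit nil-clean* if for every `x : R` there is a unit `u`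
such that `u * x` is strongly nil-clean. -/
def StronglyUnitNilClean (R : Type*) [Ring R] : Prop :=
  ∀ x : R, ∃ u : Rˣ, IsStronglyNilClean ((u : R) * x)

/-- A ring `R` is *unit-regular* if every `a : R` satisfies `a = a * u * a` for some unit `u`. -/
def UnitRegular (R : Type*) [Ring R] : Prop :=
  ∀ a : R, ∃ u : Rˣ, a = a * (u : R) * a

/-- A group is *locally finite* if every finitely generated subgroup is finite. -/
def LocallyFiniteGroup (G : Type*) [Group G] : Prop :=
  ∀ H : Subgroup G, H.FG → (H : Set G).Finite

/-- A subset `T` of a ring is *nilpotent* if there is `n ≥ 1` such that every product of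
`n` elements of `T` is zero. -/
def IsNilpotentSubset {R : Type*} [Ring R] (T : Set R) : Prop :=
  ∃ n : ℕ, 0 < n ∧ ∀ l : List R, (∀ a ∈ l, a ∈ T) → l.length = n → l.prod = 0

/-- A subset `S` of a ring is *locally nilpotent* if the non-unital subring generated by
any finite subset of `S` is nilpotent. -/
def IsLocallyNilpotentSet {R : Type*} [Ring R] (S : Set R) : Prop :=
  ∀ F : Finset R, (F : Set R) ⊆ S →
    IsNilpotentSubset ((NonUnitalSubring.closure (F : Set R) : Set R))

/-- A ring is *NI* if the set of nilpotent elements forms a two-sided ideal. -/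
def IsNIRing (R : Type*) [Ring R] : Prop :=
  ∃ I : TwoSidedIdeal R, ∀ x : R, x ∈ I ↔ IsNilpotent x

/-- A ring is *weakly 2-primal* if its set of nilpotent elements is a two-sided ideal
which is moreover locally nilpotent. -/
def Weakly2Primal (R : Type*) [Ring R] : Prop :=
  IsNIRing R ∧ IsLocallyNilpotentSet {x : R | IsNilpotent x}

open Polynomial in
lemma isStronglyNilClean_iff_isNilpotent {R : Type*} [Ring R] (x : R) :
    IsStronglyNilClean x ↔ IsNilpotent (x - x ^ 2) := by
  constructor
  · rintro ⟨e, b, he, hb, hcomm, rfl⟩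
    have hbe : Commute b e := hcomm.symm
    have key : (e + b) - (e + b) ^ 2 = b - (b * e + b * e + b * b) := by
      have h1 : e * e = e := he
      rw [sq, add_mul, mul_add, mul_add, h1, hcomm]
      noncomm_ring
    rw [key]
    have hbbe : Commute b (b * e) := (Commute.refl b).mul_right hbe
    have hnbe : IsNilpotent (b * e) := hbe.isNilpotent_mul_right hb
    have hnbb : IsNilpotent (b * b) := (Commute.refl b).isNilpotent_mul_left hb
    have hc1 : Commute (b * e) (b * b) :=
      hbbe.symm.mul_right hbbe.symm
    have hn1 : IsNilpotent (b * e + b * e) :=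
      (Commute.refl (b * e)).isNilpotent_add hnbe hnbe
    have hn2 : IsNilpotent (b * e + b * e + b * b) :=
      (hc1.add_left hc1).isNilpotent_add hn1 hnbb
    have hc2 : Commute b (b * e + b * e + b * b) :=
      (hbbe.add_right hbbe).add_right ((Commute.refl b).mul_right (Commute.refl b))
    exact hc2.isNilpotent_sub hb hn2
  · rintro ⟨n, hn⟩
    have hN : (x - x ^ 2) ^ (n + 1) = 0 := by rw [pow_succ, hn, zero_mul]
    set N := n + 1 with hNdef
    have hcop : IsCoprime ((X : ℤ[X]) ^ N) ((1 - X) ^ N) :=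
      IsCoprime.pow ⟨1, 1, by ring⟩
    obtain ⟨u, v, huv⟩ := hcop
    set φ : ℤ[X] →ₐ[ℤ] R := aeval x with hφ
    have hcommφ : ∀ p q : ℤ[X], Commute (φ p) (φ q) := fun p q => by
      show φ p * φ q = φ q * φ p
      rw [← map_mul, ← map_mul, mul_comm]
    have hXone : Commute x (1 - x) := (Commute.one_right x).sub_right (Commute.refl x)
    have hkey : φ (X ^ N * (1 - X) ^ N) = 0 := by
      have h1 : φ (X ^ N * (1 - X) ^ N) = x ^ N * (1 - x) ^ N := by
        simp [hφ]
      rw [h1, ← hXone.mul_pow]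
      have h2 : x * (1 - x) = x - x ^ 2 := by rw [mul_sub, mul_one, sq]
      rw [h2, hN]
    refine ⟨φ (u * X ^ N), x - φ (u * X ^ N), ?_, ?_, ?_, by abel⟩
    · -- idempotent
      have hid : (u * X ^ N : ℤ[X]) - (u * X ^ N) ^ 2 = u * v * (X ^ N * (1 - X) ^ N) := by
        linear_combination (-(u * X ^ N)) * huv
      have h2 : φ (u * X ^ N) - φ (u * X ^ N) ^ 2
          = φ (u * v) * φ (X ^ N * (1 - X) ^ N) := by
        rw [← map_pow, ← map_sub, hid, map_mul]
      rw [hkey, mul_zero, sub_eq_zero] at h2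
      show φ (u * X ^ N) * φ (u * X ^ N) = φ (u * X ^ N)
      rw [← sq]
      exact h2.symm
    · -- nilpotent part
      have hid2 : (X : ℤ[X]) - u * X ^ N = (X - X ^ 2) * (v * (1 - X) ^ n - X ^ n * u) := by
        rw [hNdef, pow_succ, pow_succ] at huv
        rw [hNdef]
        linear_combination (-(X : ℤ[X])) * huv
      have h3 : x - φ (u * X ^ N) = (x - x ^ 2) * φ (v * (1 - X) ^ n - X ^ n * u) := by
        have h4 := congrArg φ hid2
        simpa only [map_sub, map_mul, map_pow, map_one, hφ, aeval_X] using h4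
      rw [h3]
      have hcom : Commute (x - x ^ 2) (φ (v * (1 - X) ^ n - X ^ n * u)) := by
        have h5 := hcommφ (X - X ^ 2) (v * (1 - X) ^ n - X ^ n * u)
        simpa only [Commute, SemiconjBy, map_sub, map_mul, map_pow, map_one, hφ, aeval_X] using h5
      exact hcom.isNilpotent_mul_right ⟨N, hN⟩
    · -- commuting
      have h5 := hcommφ (u * X ^ N) (X - u * X ^ N)
      simpa only [Commute, SemiconjBy, map_sub, map_mul, map_pow, map_one, hφ, aeval_X] using h5

section Aux

variable {R : Type*} [Ring R]

lemma isNilpotent_subring_coe_iff (S : Subring R) (a : S) :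
    IsNilpotent (a : R) ↔ IsNilpotent a := by
  constructor
  · rintro ⟨m, hm⟩
    exact ⟨m, by exact_mod_cast hm⟩
  · exact fun h => h.map S.subtype

lemma pow_add_mem (K : TwoSidedIdeal R) (y k : R) (hk : k ∈ K) (m : ℕ) :
    ∃ κ ∈ K, (y + k) ^ m = y ^ m + κ := by
  induction m with
  | zero => exact ⟨0, K.zero_mem, by simp⟩
  | succ m ih =>
    obtain ⟨κ, hκ, hκe⟩ := ih
    refine ⟨y ^ m * k + κ * y + κ * k, ?_, ?_⟩
    · exact K.add_mem (K.add_mem (K.mul_mem_left _ _ hk) (K.mul_mem_right _ _ hκ))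
        (K.mul_mem_right _ _ hκ)
    · rw [pow_succ, hκe, pow_succ]
      noncomm_ring
lemma isNilpotent_add_of_mem (K : TwoSidedIdeal R) (hK : ∀ x ∈ K, IsNilpotent x)
    {y k : R} (hy : IsNilpotent y) (hk : k ∈ K) : IsNilpotent (y + k) := by
  obtain ⟨m, hm⟩ := hy
  obtain ⟨κ, hκ, hκe⟩ := pow_add_mem K y k hk m
  obtain ⟨j, hj⟩ := hK κ hκ
  exact ⟨m * j, by rw [pow_mul, hκe, hm, zero_add, hj]⟩

lemma perturb_nilpotent (K : TwoSidedIdeal R) (hK : ∀ x ∈ K, IsNilpotent x)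
    {t k : R} (ht : IsNilpotent (t - t ^ 2)) (hk : k ∈ K) :
    IsNilpotent ((t + k) - (t + k) ^ 2) := by
  have hid : (t + k) - (t + k) ^ 2 = (t - t ^ 2) + (k - t * k - k * t - k * k) := by
    noncomm_ring
  rw [hid]
  refine isNilpotent_add_of_mem K hK ht ?_
  exact K.sub_mem (K.sub_mem (K.sub_mem hk (K.mul_mem_left _ _ hk))
    (K.mul_mem_right _ _ hk)) (K.mul_mem_right _ _ hk)

lemma isUnit_of_mul_isUnit_both {M : Type*} [Monoid M] {a b : M}
    (h1 : IsUnit (a * b)) (h2 : IsUnit (b * a)) : IsUnit a := by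
  obtain ⟨A, hA⟩ := h1
  obtain ⟨B, hB⟩ := h2
  have hright : a * (b * ↑A⁻¹) = 1 := by rw [← mul_assoc, ← hA]; exact A.mul_inv
  have hleft : (↑B⁻¹ * b) * a = 1 := by rw [mul_assoc, ← hB]; exact B.inv_mul
  have heq : b * ↑A⁻¹ = ↑B⁻¹ * b := by
    calc b * ↑A⁻¹ = ((↑B⁻¹ * b) * a) * (b * ↑A⁻¹) := by rw [hleft, one_mul]
    _ = (↑B⁻¹ * b) * (a * (b * ↑A⁻¹)) := by rw [mul_assoc]
    _ = ↑B⁻¹ * b := by rw [hright, mul_one]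
  exact ⟨⟨a, b * ↑A⁻¹, hright, by rw [heq]; exact hleft⟩, rfl⟩

lemma isUnit_subring (S : Subring R) (K : TwoSidedIdeal R)
    (hK : ∀ x ∈ K, IsNilpotent x)
    (hsum : ∀ x : R, ∃ s ∈ S, ∃ k ∈ K, x = s + k)
    (t : S) (h : IsUnit (t : R)) : IsUnit t := by
  obtain ⟨U, hU⟩ := h
  obtain ⟨s', hs', k', hk', hdec⟩ := hsum (↑U⁻¹ : R)
  set b : S := ⟨s', hs'⟩ with hb
  have hUb : ((b : S) : R) = s' := rfl
  have hmul : (t : R) * s' + (t : R) * k' = 1 := by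
    rw [← mul_add, ← hdec, ← hU]; exact U.mul_inv
  have hmul' : s' * (t : R) + k' * (t : R) = 1 := by
    rw [← add_mul, ← hdec, ← hU]; exact U.inv_mul
  have h1 : IsUnit (t * b) := by
    have hnil : IsNilpotent (t * b - 1) := by
      rw [← isNilpotent_subring_coe_iff]
      have hcoe : ((t * b - 1 : S) : R) = -((t : R) * k') := by
        push_cast [hUb]
        rw [← hmul]; abel
      rw [hcoe]
      exact hK _ (K.neg_mem (K.mul_mem_left _ _ hk'))
    have := hnil.isUnit_one_add
    have he : (1 : S) + (t * b - 1) = t * b := by abel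
    rwa [he] at this
  have h2 : IsUnit (b * t) := by
    have hnil : IsNilpotent (b * t - 1) := by
      rw [← isNilpotent_subring_coe_iff]
      have hcoe : ((b * t - 1 : S) : R) = -(k' * (t : R)) := by
        push_cast [hUb]
        rw [← hmul']; abel
      rw [hcoe]
      exact hK _ (K.neg_mem (K.mul_mem_right _ _ hk'))
    have := hnil.isUnit_one_add
    have he : (1 : S) + (b * t - 1) = b * t := by abel
    rwa [he] at this
  exact isUnit_of_mul_isUnit_both h1 h2

end Aux


theorem strongly_unit_nil_clean_of_subring_add_nil_ideal
    (R : Type*) [Ring R] (S : Subring R) (K : TwoSidedIdeal R)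
    (hK : ∀ x ∈ K, IsNilpotent x)
    (hsum : ∀ x : R, ∃ s ∈ S, ∃ k ∈ K, x = s + k) :
    StronglyUnitNilClean R ↔ StronglyUnitNilClean S := by
  constructor
  · intro hR x
    obtain ⟨u, hsnc⟩ := hR (x : R)
    rw [isStronglyNilClean_iff_isNilpotent] at hsnc
    obtain ⟨s₁, hs₁, k₁, hk₁, hdec⟩ := hsum (↑u : R)
    have hsub : s₁ = (↑u : R) - k₁ := by rw [hdec]; abel
    have hs1unit : IsUnit s₁ := by
      have hiso : s₁ = ↑u * (1 - ↑u⁻¹ * k₁) := by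
        rw [hsub, mul_sub, mul_one, ← mul_assoc, u.mul_inv, one_mul]
      rw [hiso]
      exact u.isUnit.mul (hK _ (K.mul_mem_left _ _ hk₁)).isUnit_one_sub
    have hw : IsUnit (⟨s₁, hs₁⟩ : S) := isUnit_subring S K hK hsum ⟨s₁, hs₁⟩ hs1unit
    refine ⟨hw.unit, ?_⟩
    rw [isStronglyNilClean_iff_isNilpotent, ← isNilpotent_subring_coe_iff]
    have hwc : ((↑hw.unit : S) : R) = s₁ := by rw [IsUnit.unit_spec]
    have hcoe : ((↑hw.unit * x - (↑hw.unit * x) ^ 2 : S) : R)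
        = s₁ * (x : R) - (s₁ * (x : R)) ^ 2 := by
      push_cast [hwc]
      rfl
    rw [hcoe]
    have hrw : s₁ * (x : R) = (↑u : R) * (x : R) + (-(k₁ * (x : R))) := by
      rw [hsub, sub_mul, sub_eq_add_neg]
    rw [hrw]
    exact perturb_nilpotent K hK hsnc (K.neg_mem (K.mul_mem_right _ _ hk₁))
  · intro hS x
    obtain ⟨s, hs, k, hk, hdec⟩ := hsum x
    obtain ⟨v, hv⟩ := hS ⟨s, hs⟩
    rw [isStronglyNilClean_iff_isNilpotent] at hv
    refine ⟨Units.map S.subtype.toMonoidHom v, ?_⟩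
    rw [isStronglyNilClean_iff_isNilpotent]
    have hvc : ((Units.map S.subtype.toMonoidHom v : Rˣ) : R) = ((↑v : S) : R) := rfl
    have hnil : IsNilpotent (((↑v : S) : R) * s - (((↑v : S) : R) * s) ^ 2) := by
      have := (isNilpotent_subring_coe_iff S _).mpr hv
      have hcoe : ((↑v * ⟨s, hs⟩ - (↑v * ⟨s, hs⟩) ^ 2 : S) : R)
          = ((↑v : S) : R) * s - (((↑v : S) : R) * s) ^ 2 := by
        push_cast
        rfl
      rwa [hcoe] at this
    rw [hvc, hdec, mul_add]
    exact perturb_nilpotent K hK hnil (K.mul_mem_left _ _ hk)
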